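/- Let G be a group, σ an automorphism of G, g, h ∈ G, and k a positive integer. Then for natural numbers s < k and t, one has h = ρ_{(g,1)^{s+tk}}(1_G) if and only if ρ_{(g,1)^s}^{-1}(h) = ρ_{(g',k)^t}(1_G), where g' = ρ_{(g,1)^k}(1_G). Hence SDLP(G, σ) reduces to k instances of SDLP(G, σ^k). -/
import Mathlib


/-- Multiplication in the semidirect product `G ⋊_σ ℤ` for `σ ∈ Aut(G)`. -/
def sdMulZ {G : Type*} [Group G] (σ : MulAut G) (x y : G × ℤ) : G × ℤ :=
  (x.1 * (σ ^ x.2) y.1, x.2 + y.2)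

/-- The `t`-th power (natural exponent) in `G ⋊_σ ℤ`. -/
def sdPowZ {G : Type*} [Group G] (σ : MulAut G) (x : G × ℤ) : ℕ → G × ℤ
  | 0 => (1, 0)
  | t + 1 => sdMulZ σ x (sdPowZ σ x t)

/-- The transformation `ρ_{(g,s)} : G → G`, `x ↦ g·σ^s(x)`. -/
def rhoZ {G : Type*} [Group G] (σ : MulAut G) (x : G × ℤ) : G → G :=
  fun z => x.1 * (σ ^ x.2) z

/-- The inverse of the transformation `ρ_{(g,s)}` (it is invertible since `σ ∈ Aut(G)`). -/
def rhoZinv {G : Type*} [Group G] (σ : MulAut G) (x : G × ℤ) : G → G :=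
  fun z => (σ ^ (-x.2)) (x.1⁻¹ * z)

section
variable {G : Type*} [Group G] (σ : MulAut G)

lemma sdMulZ_assoc (x y z : G × ℤ) :
    sdMulZ σ (sdMulZ σ x y) z = sdMulZ σ x (sdMulZ σ y z) := by
  simp [sdMulZ, zpow_add, mul_assoc, add_assoc]

lemma sdMulZ_one (x : G × ℤ) : sdMulZ σ x (1, 0) = x := by
  simp [sdMulZ]

lemma sdPowZ_add (x : G × ℤ) (m n : ℕ) :
    sdPowZ σ x (m + n) = sdMulZ σ (sdPowZ σ x m) (sdPowZ σ x n) := by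
  induction m with
  | zero => simp [sdPowZ, sdMulZ]
  | succ m ih =>
      have : m + 1 + n = (m + n) + 1 := by ring
      rw [this]
      simp [sdPowZ, ih, sdMulZ_assoc]

lemma sdPowZ_snd (x : G × ℤ) (n : ℕ) : (sdPowZ σ x n).2 = n * x.2 := by
  induction n with
  | zero => simp [sdPowZ]
  | succ n ih => simp [sdPowZ, sdMulZ, ih]; ring

lemma sdPowZ_mul (x : G × ℤ) (t k : ℕ) :
    sdPowZ σ x (t * k) = sdPowZ σ (sdPowZ σ x k) t := by
  induction t with
  | zero => simp [sdPowZ]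
  | succ t ih =>
      have : (t + 1) * k = k + t * k := by ring
      rw [this, sdPowZ_add, ih, sdPowZ]

end

/-- for `s < k`, `h = ρ_{(g,1)^{s+tk}}(1_G)` iff
`ρ_{(g,1)^s}^{-1}(h) = ρ_{(g',k)^t}(1_G)` where `g' = ρ_{(g,1)^k}(1_G)`.
Hence SDLP`(G,σ)` reduces to `k` instances of SDLP`(G,σ^k)`. -/
theorem sdlp_reduce_to_power {G : Type*} [Group G] (σ : MulAut G) (g h : G)
    (k : ℕ) (hk : 0 < k) :
    ∀ s t : ℕ, s < k →
      (h = rhoZ σ (sdPowZ σ (g, 1) (s + t * k)) 1 ↔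
        rhoZinv σ (sdPowZ σ (g, 1) s) h
          = rhoZ σ (sdPowZ σ (rhoZ σ (sdPowZ σ (g, 1) k) 1, (k : ℤ)) t) 1) := by
  intro s t hs
  have hQ : (rhoZ σ (sdPowZ σ (g, 1) k) 1, (k : ℤ)) = sdPowZ σ (g, 1) k := by
    refine Prod.ext ?_ ?_
    · simp [rhoZ]
    · simp [sdPowZ_snd]
  rw [hQ, ← sdPowZ_mul]
  rw [sdPowZ_add]
  simp only [rhoZ, rhoZinv, sdMulZ, sdPowZ_snd, mul_one, map_one]
  constructor
  · rintro rfl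
    simp [mul_assoc, zpow_neg, ← MulAut.mul_apply, ← zpow_add]
  · intro hh
    have := congrArg (fun z => (sdPowZ σ (g, 1) s).1 * (σ ^ (s : ℤ)) z) hh
    simp only [zpow_neg, ← MulAut.mul_apply, ← zpow_add] at this
    simpa [mul_assoc] using this
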